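/- Let k be a field, H a bialgebra over k with comultiplication Δ and counit ε, and let J and L be invertible elements of the algebra H ⊗ H, each satisfying the 2-cocycle identity ((id ⊗ Δ)(W)) · (1 ⊗ W) = ((Δ ⊗ id)(W)) · (W ⊗ 1) in H ⊗ H ⊗ H (for W = J and W = L). Then the k-linear map ᴸΔᴶ : H → H ⊗ H defined by ᴸΔᴶ(h) = L⁻¹ · Δ(h) · J is coassociative, i.e., (id ⊗ ᴸΔᴶ) ∘ ᴸΔᴶ = (ᴸΔᴶ ⊗ id) ∘ ᴸΔᴶ up to the canonical associativity isomorphism of tensor products. If, moreover, J and L are normalized, i.e., (ε ⊗ id)(J) = 1 = (id ⊗ ε)(J) and (ε ⊗ id)(L) = 1 = (id ⊗ ε)(L), then ε is a counit for ᴸΔᴶ, so that (H, ᴸΔᴶ, ε) is a coalgebra over k. -/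

import Mathlib

/-!
Statement 13: Let `k` be a field, `H` a bialgebra over `k` and `J`, `L` invertible elements
of `H ⊗ H` satisfying the 2-cocycle identity
`((id ⊗ Δ)(W)) · (1 ⊗ W) = ((Δ ⊗ id)(W)) · (W ⊗ 1)` in `H ⊗ H ⊗ H`.
Then `ᴸΔᴶ(h) := L⁻¹ · Δ(h) · J` is coassociative (up to the canonical associativity
isomorphism of tensor products), and if `J` and `L` are moreover normalized, then the counit
`ε` of `H` is a counit for `ᴸΔᴶ`, so `(H, ᴸΔᴶ, ε)` is a coalgebra over `k`.
-/

open TensorProduct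

universe u v

variable (k : Type u) (H : Type v) [Field k] [Ring H] [Bialgebra k H]

/-- The Hopf 2-cocycle identity
`((id ⊗ Δ)(W)) · (1 ⊗ W) = ((Δ ⊗ id)(W)) · (W ⊗ 1)` in `H ⊗ H ⊗ H`
(the right-hand side is transported along the canonical associativity isomorphism). -/
def IsTwoCocycle (W : H ⊗[k] H) : Prop :=
  (LinearMap.lTensor H (Coalgebra.comul (R := k) (A := H))) W * ((1 : H) ⊗ₜ[k] W) =
    (TensorProduct.assoc k H H H)
        ((LinearMap.rTensor H (Coalgebra.comul (R := k) (A := H))) W) *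
      (TensorProduct.assoc k H H H) (W ⊗ₜ[k] (1 : H))

/-- Normalization of an element `W` of `H ⊗ H`: `(ε ⊗ id)(W) = 1 = (id ⊗ ε)(W)`. -/
def IsNormalized (W : H ⊗[k] H) : Prop :=
  (TensorProduct.lid k H) ((LinearMap.rTensor H (Coalgebra.counit (R := k) (A := H))) W) = 1 ∧
  (TensorProduct.rid k H) ((LinearMap.lTensor H (Coalgebra.counit (R := k) (A := H))) W) = 1

/-- The twisted comultiplication `ᴸΔᴶ : H →ₗ[k] H ⊗ H`, `h ↦ L⁻¹ · Δ(h) · J`. -/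
noncomputable def twistedComul (J L : H ⊗[k] H) [Invertible L] : H →ₗ[k] H ⊗[k] H :=
  (LinearMap.mulRight k J) ∘ₗ (LinearMap.mulLeft k (⅟L)) ∘ₗ
    (Coalgebra.comul (R := k) (A := H))

/- ### Auxiliary algebra homomorphisms -/

noncomputable def D1 : H ⊗[k] H →ₐ[k] H ⊗[k] (H ⊗[k] H) :=
  Algebra.TensorProduct.map (AlgHom.id k H) (Bialgebra.comulAlgHom k H)

noncomputable def D2 : H ⊗[k] H →ₐ[k] (H ⊗[k] H) ⊗[k] H :=
  Algebra.TensorProduct.map (Bialgebra.comulAlgHom k H) (AlgHom.id k H)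

noncomputable def incR : H ⊗[k] H →ₐ[k] H ⊗[k] (H ⊗[k] H) :=
  Algebra.TensorProduct.includeRight

noncomputable def incL : H ⊗[k] H →ₐ[k] (H ⊗[k] H) ⊗[k] H :=
  Algebra.TensorProduct.includeLeft

lemma incR_apply (a : H ⊗[k] H) : incR k H a = (1 : H) ⊗ₜ[k] a := rfl

lemma incL_apply (a : H ⊗[k] H) : incL k H a = a ⊗ₜ[k] (1 : H) := rfl

lemma lTensor_comul_eq :
    LinearMap.lTensor H (Coalgebra.comul (R := k) (A := H)) = (D1 k H).toLinearMap := by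
  apply TensorProduct.ext'
  intro x y
  simp [D1]

lemma rTensor_comul_eq :
    LinearMap.rTensor H (Coalgebra.comul (R := k) (A := H)) = (D2 k H).toLinearMap := by
  apply TensorProduct.ext'
  intro x y
  simp [D2]

lemma lTensor_mulRight (a : H ⊗[k] H) :
    LinearMap.lTensor H (LinearMap.mulRight k a) =
      LinearMap.mulRight k ((1 : H) ⊗ₜ[k] a) := by
  apply TensorProduct.ext'
  intro x y
  simp [Algebra.TensorProduct.tmul_mul_tmul]

lemma lTensor_mulLeft (a : H ⊗[k] H) :
    LinearMap.lTensor H (LinearMap.mulLeft k a) =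
      LinearMap.mulLeft k ((1 : H) ⊗ₜ[k] a) := by
  apply TensorProduct.ext'
  intro x y
  simp [Algebra.TensorProduct.tmul_mul_tmul]

lemma rTensor_mulRight (a : H ⊗[k] H) :
    LinearMap.rTensor H (LinearMap.mulRight k a) =
      LinearMap.mulRight k (a ⊗ₜ[k] (1 : H)) := by
  apply TensorProduct.ext'
  intro x y
  simp [Algebra.TensorProduct.tmul_mul_tmul]

lemma rTensor_mulLeft (a : H ⊗[k] H) :
    LinearMap.rTensor H (LinearMap.mulLeft k a) =
      LinearMap.mulLeft k (a ⊗ₜ[k] (1 : H)) := by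
  apply TensorProduct.ext'
  intro x y
  simp [Algebra.TensorProduct.tmul_mul_tmul]

/-- The 2-cocycle identity rephrased in terms of the algebra maps `D1`, `D2`, `incL`, `incR`
and the algebra associator. -/
lemma cocycle' (W : H ⊗[k] H) (hW : IsTwoCocycle k H W) :
    (D1 k H) W * (incR k H) W =
      Algebra.TensorProduct.assoc k k k H H H ((D2 k H) W * (incL k H) W) := by
  rw [IsTwoCocycle, lTensor_comul_eq, rTensor_comul_eq] at hW
  rw [map_mul]
  exact hW

noncomputable def E1 : H ⊗[k] H →ₐ[k] H :=
  ((Algebra.TensorProduct.lid k H).toAlgHom).comp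
    (Algebra.TensorProduct.map (Bialgebra.counitAlgHom k H) (AlgHom.id k H))

noncomputable def E2 : H ⊗[k] H →ₐ[k] H :=
  ((Algebra.TensorProduct.rid k k H).toAlgHom).comp
    (Algebra.TensorProduct.map (AlgHom.id k H) (Bialgebra.counitAlgHom k H))

lemma E1_eq :
    (TensorProduct.lid k H).toLinearMap ∘ₗ
      LinearMap.rTensor H (Coalgebra.counit (R := k) (A := H)) = (E1 k H).toLinearMap := by
  apply TensorProduct.ext'
  intro x y
  simp [E1]

lemma E2_eq :
    (TensorProduct.rid k H).toLinearMap ∘ₗ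
      LinearMap.lTensor H (Coalgebra.counit (R := k) (A := H)) = (E2 k H).toLinearMap := by
  apply TensorProduct.ext'
  intro x y
  simp [E2]

set_option maxHeartbeats 1000000 in
/-- Statement 13: for invertible 2-cocycles `J`, `L`, the twisted comultiplication
`ᴸΔᴶ = L⁻¹ · Δ(-) · J` is coassociative, and if furthermore `J` and `L` are normalized then
`ε` is a counit for `ᴸΔᴶ`, i.e. `(H, ᴸΔᴶ, ε)` is a coalgebra over `k`. -/
theorem stmt13 (J L : H ⊗[k] H) [Invertible J] [Invertible L]
    (hJ : IsTwoCocycle k H J) (hL : IsTwoCocycle k H L) :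
    ((LinearMap.lTensor H (twistedComul k H J L)) ∘ₗ twistedComul k H J L =
      (TensorProduct.assoc k H H H).toLinearMap ∘ₗ
        (LinearMap.rTensor H (twistedComul k H J L)) ∘ₗ twistedComul k H J L) ∧
    (IsNormalized k H J → IsNormalized k H L →
      ((TensorProduct.lid k H).toLinearMap ∘ₗ
          (LinearMap.rTensor H (Coalgebra.counit (R := k) (A := H))) ∘ₗ
            twistedComul k H J L = LinearMap.id ∧
        (TensorProduct.rid k H).toLinearMap ∘ₗ
          (LinearMap.lTensor H (Coalgebra.counit (R := k) (A := H))) ∘ₗ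
            twistedComul k H J L = LinearMap.id)) := by
  have hAs : ∀ x : (H ⊗[k] H) ⊗[k] H,
      (TensorProduct.assoc k H H H) x = Algebra.TensorProduct.assoc k k k H H H x :=
    fun _ => rfl
  have hTh : ∀ h : H, twistedComul k H J L h =
      ⅟L * (Coalgebra.comul (R := k) (A := H) h) * J := fun _ => rfl
  constructor
  · -- coassociativity
    have hlT : LinearMap.lTensor H (twistedComul k H J L) =
        LinearMap.mulRight k ((1 : H) ⊗ₜ[k] J) ∘ₗ
          LinearMap.mulLeft k ((1 : H) ⊗ₜ[k] (⅟L)) ∘ₗ (D1 k H).toLinearMap := by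
      rw [twistedComul, LinearMap.lTensor_comp, LinearMap.lTensor_comp,
        lTensor_mulRight, lTensor_mulLeft, lTensor_comul_eq]
    have hrT : LinearMap.rTensor H (twistedComul k H J L) =
        LinearMap.mulRight k (J ⊗ₜ[k] (1 : H)) ∘ₗ
          LinearMap.mulLeft k ((⅟L) ⊗ₜ[k] (1 : H)) ∘ₗ (D2 k H).toLinearMap := by
      rw [twistedComul, LinearMap.rTensor_comp, LinearMap.rTensor_comp,
        rTensor_mulRight, rTensor_mulLeft, rTensor_comul_eq]
    apply LinearMap.ext
    intro h
    simp only [LinearMap.comp_apply, hlT, hrT, LinearMap.mulRight_apply,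
      LinearMap.mulLeft_apply, AlgHom.toLinearMap_apply, LinearEquiv.coe_coe, hTh]
    rw [hAs]
    -- invertibility instances
    letI i1 : Invertible ((D1 k H) L) := Invertible.map _ L
    letI i2 : Invertible ((incR k H) L) := Invertible.map _ L
    letI i3 : Invertible ((D2 k H) L) := Invertible.map _ L
    letI i4 : Invertible ((incL k H) L) := Invertible.map _ L
    letI i5 : Invertible ((D1 k H) L * (incR k H) L) := invertibleMul _ _
    letI i6 : Invertible ((D2 k H) L * (incL k H) L) := invertibleMul _ _
    letI i7 : Invertible
        (Algebra.TensorProduct.assoc k k k H H H ((D2 k H) L * (incL k H) L)) :=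
      Invertible.map _ _
    -- the middle components agree, by coassociativity
    have h2 : (D1 k H) (Coalgebra.comul (R := k) (A := H) h) =
        Algebra.TensorProduct.assoc k k k H H H
          ((D2 k H) (Coalgebra.comul (R := k) (A := H) h)) := by
      have hc := Coalgebra.coassoc_apply (R := k) (A := H) h
      rw [lTensor_comul_eq, rTensor_comul_eq] at hc
      exact hc.symm
    -- the right components agree, by the cocycle identity for J
    have hQ : (D1 k H) J * ((1 : H) ⊗ₜ[k] J) =
        Algebra.TensorProduct.assoc k k k H H H ((D2 k H) J) *
          Algebra.TensorProduct.assoc k k k H H H (J ⊗ₜ[k] (1 : H)) := by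
      have := cocycle' k H J hJ
      rw [map_mul] at this
      rw [← incR_apply, ← incL_apply]
      exact this
    -- the left components agree, by the cocycle identity for L and invertibility
    have hP : ((1 : H) ⊗ₜ[k] (⅟L)) * (D1 k H) (⅟L) =
        Algebra.TensorProduct.assoc k k k H H H ((⅟L) ⊗ₜ[k] (1 : H)) *
          Algebra.TensorProduct.assoc k k k H H H ((D2 k H) (⅟L)) := by
      rw [← incR_apply, ← incL_apply]
      calc (incR k H) (⅟L) * (D1 k H) (⅟L)
          = ⅟((incR k H) L) * ⅟((D1 k H) L) := by rw [map_invOf, map_invOf]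
        _ = ⅟((D1 k H) L * (incR k H) L) := (invOf_mul _ _).symm
        _ = ⅟(Algebra.TensorProduct.assoc k k k H H H ((D2 k H) L * (incL k H) L)) :=
            Invertible.congr _ _ (cocycle' k H L hL)
        _ = Algebra.TensorProduct.assoc k k k H H H (⅟((D2 k H) L * (incL k H) L)) :=
            (map_invOf _ _).symm
        _ = Algebra.TensorProduct.assoc k k k H H H (⅟((incL k H) L) * ⅟((D2 k H) L)) := by
            rw [invOf_mul]
        _ = Algebra.TensorProduct.assoc k k k H H H ((incL k H) (⅟L) * (D2 k H) (⅟L)) := by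
            rw [map_invOf, map_invOf]
        _ = Algebra.TensorProduct.assoc k k k H H H ((incL k H) (⅟L)) *
              Algebra.TensorProduct.assoc k k k H H H ((D2 k H) (⅟L)) := map_mul _ _ _
    -- assemble
    simp only [map_mul]
    calc ((1 : H) ⊗ₜ[k] (⅟L)) *
          ((D1 k H) (⅟L) * (D1 k H) (Coalgebra.comul (R := k) (A := H) h) * (D1 k H) J) *
          ((1 : H) ⊗ₜ[k] J)
        = (((1 : H) ⊗ₜ[k] (⅟L)) * (D1 k H) (⅟L)) *
            (D1 k H) (Coalgebra.comul (R := k) (A := H) h) *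
            ((D1 k H) J * ((1 : H) ⊗ₜ[k] J)) := by simp only [mul_assoc]
      _ = (Algebra.TensorProduct.assoc k k k H H H ((⅟L) ⊗ₜ[k] (1 : H)) *
            Algebra.TensorProduct.assoc k k k H H H ((D2 k H) (⅟L))) *
            (Algebra.TensorProduct.assoc k k k H H H
              ((D2 k H) (Coalgebra.comul (R := k) (A := H) h))) *
            (Algebra.TensorProduct.assoc k k k H H H ((D2 k H) J) *
              Algebra.TensorProduct.assoc k k k H H H (J ⊗ₜ[k] (1 : H))) := by
          rw [hP, h2, hQ]
      _ = Algebra.TensorProduct.assoc k k k H H H ((⅟L) ⊗ₜ[k] (1 : H)) *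
            (Algebra.TensorProduct.assoc k k k H H H ((D2 k H) (⅟L)) *
              Algebra.TensorProduct.assoc k k k H H H
                ((D2 k H) (Coalgebra.comul (R := k) (A := H) h)) *
              Algebra.TensorProduct.assoc k k k H H H ((D2 k H) J)) *
            Algebra.TensorProduct.assoc k k k H H H (J ⊗ₜ[k] (1 : H)) := by
          simp only [mul_assoc]
  · -- counit
    rintro hJn hLn
    have key1 : ∀ x : H ⊗[k] H,
        (TensorProduct.lid k H)
            ((LinearMap.rTensor H (Coalgebra.counit (R := k) (A := H))) x) = E1 k H x :=
      fun x => LinearMap.congr_fun (E1_eq k H) x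
    have key2 : ∀ x : H ⊗[k] H,
        (TensorProduct.rid k H)
            ((LinearMap.lTensor H (Coalgebra.counit (R := k) (A := H))) x) = E2 k H x :=
      fun x => LinearMap.congr_fun (E2_eq k H) x
    have hE1L : E1 k H L = 1 := by rw [← key1]; exact hLn.1
    have hE1J : E1 k H J = 1 := by rw [← key1]; exact hJn.1
    have hE2L : E2 k H L = 1 := by rw [← key2]; exact hLn.2
    have hE2J : E2 k H J = 1 := by rw [← key2]; exact hJn.2
    have hE1Li : E1 k H (⅟L) = 1 := by
      have h' : E1 k H (⅟L) * E1 k H L = 1 := by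
        rw [← map_mul, invOf_mul_self, map_one]
      rwa [hE1L, mul_one] at h'
    have hE2Li : E2 k H (⅟L) = 1 := by
      have h' : E2 k H (⅟L) * E2 k H L = 1 := by
        rw [← map_mul, invOf_mul_self, map_one]
      rwa [hE2L, mul_one] at h'
    constructor
    · apply LinearMap.ext
      intro h
      simp only [LinearMap.comp_apply, LinearMap.id_apply, LinearEquiv.coe_coe]
      rw [key1, hTh, map_mul, map_mul, hE1Li, hE1J, one_mul, mul_one]
      rw [← key1, Coalgebra.rTensor_counit_comul]
      simp
    · apply LinearMap.ext
      intro h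
      simp only [LinearMap.comp_apply, LinearMap.id_apply, LinearEquiv.coe_coe]
      rw [key2, hTh, map_mul, map_mul, hE2Li, hE2J, one_mul, mul_one]
      rw [← key2, Coalgebra.lTensor_counit_comul]
      simp
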